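/- Let G be a digraph with vertex b and I ⊆ V(G) \ {b} such that every finite subset of I admits an edge-disjoint linkage to b. Then there is no strictly increasing sequence (D_n)_{n∈ℕ} of exact vertex sets, each equal to its hull, all of whose orders are bounded by a common constant. -/

import Mathlib

/-- A (finite) directed path in the digraph with adjacency `Adj`:
a nonempty list of distinct vertices whose consecutive pairs are edges. -/
structure DiPath {V : Type*} (Adj : V → V → Prop) : Type _ where
  verts : List V
  ne : verts ≠ []
  chain : verts.Chain' Adj
  nodup : verts.Nodup

namespace DiPath
variable {V : Type*} {Adj : V → V → Prop}
/-- The first vertex of a directed path. -/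
def first (P : DiPath Adj) : V := P.verts.head P.ne
/-- The last vertex of a directed path. -/
def last (P : DiPath Adj) : V := P.verts.getLast P.ne
/-- The (directed) edges of a path, as ordered pairs of consecutive vertices. -/
def edges (P : DiPath Adj) : List (V × V) := P.verts.zip P.verts.tail
/-- The edge set of a path. -/
def edgeSet (P : DiPath Adj) : Set (V × V) := {e | e ∈ P.edges}
/-- The vertex set of a path. -/
def vertexSet (P : DiPath Adj) : Set V := {v | v ∈ P.verts}
end DiPath

/-- A directed ray: a one-way infinite directed path. -/
structure DiRay {V : Type*} (Adj : V → V → Prop) : Type _ where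
  f : ℕ → V
  inj : Function.Injective f
  adj : ∀ n, Adj (f n) (f (n + 1))

namespace DiRay
variable {V : Type*} {Adj : V → V → Prop}
/-- The first vertex of a ray. -/
def first (R : DiRay Adj) : V := R.f 0
/-- The edge set of a ray. -/
def edgeSet (R : DiRay Adj) : Set (V × V) := Set.range fun n => (R.f n, R.f (n + 1))
/-- The vertex set of a ray. -/
def vertexSet (R : DiRay Adj) : Set V := Set.range R.f
end DiRay

/-- A path or a ray. -/
inductive PR {V : Type*} (Adj : V → V → Prop) : Type _
  | path : DiPath Adj → PR Adj
  | ray : DiRay Adj → PR Adj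

namespace PR
variable {V : Type*} {Adj : V → V → Prop}
/-- The first vertex. -/
def first : PR Adj → V
  | .path P => P.first
  | .ray R => R.first
/-- The edge set. -/
def edgeSet : PR Adj → Set (V × V)
  | .path P => P.edgeSet
  | .ray R => R.edgeSet
/-- The vertex set. -/
def vertexSet : PR Adj → Set V
  | .path P => P.vertexSet
  | .ray R => R.vertexSet
end PR

/-- A vertex `v` dominates `b` (edge version): there are infinitely many
pairwise edge-disjoint directed `v`–`b` paths. -/
def VDom {V : Type*} (Adj : V → V → Prop) (b v : V) : Prop :=
  ∃ P : ℕ → DiPath Adj, Function.Injective P ∧ (∀ n, (P n).first = v) ∧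
    (∀ n, (P n).last = b) ∧ ∀ m n, m ≠ n → Disjoint (P m).edgeSet (P n).edgeSet

/-- A ray `R` dominates `b` (edge version): there are infinitely many pairwise
edge-disjoint directed paths from `R` to `b`. -/
def RDom {V : Type*} (Adj : V → V → Prop) (b : V) (R : DiRay Adj) : Prop :=
  ∃ P : ℕ → DiPath Adj, Function.Injective P ∧ (∀ n, (P n).first ∈ R.vertexSet) ∧
    (∀ n, (P n).last = b) ∧ ∀ m n, m ≠ n → Disjoint (P m).edgeSet (P n).edgeSet

/-- A path or ray is good for `b` if it ends at `b` or dominates `b`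
(a path dominates `b` if its last vertex does; a ray dominates as a ray). -/
def PR.Good {V : Type*} {Adj : V → V → Prop} (b : V) : PR Adj → Prop
  | .path P => P.last = b ∨ VDom Adj b P.last
  | .ray R => RDom Adj b R

/-- A domination linkage (edge version) from `I` to `b`: pairwise edge-disjoint
paths or rays, one starting at each vertex of `I`, each ending at `b` or dominating `b`. -/
def DomLinkage {V : Type*} (Adj : V → V → Prop) (b : V) (I : Set V) : Prop :=
  ∃ Q : I → PR Adj, (∀ v : I, (Q v).first = (v : V)) ∧ (∀ v, (Q v).Good b) ∧
    ∀ v w : I, v ≠ w → Disjoint (Q v).edgeSet (Q w).edgeSet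

/-- The finite set `S` can be linked to `b` by pairwise edge-disjoint directed paths,
one starting at each vertex of `S`, each ending at `b`. -/
def FinLinked {V : Type*} (Adj : V → V → Prop) (b : V) (S : Finset V) : Prop :=
  ∃ P : S → DiPath Adj, (∀ s, (P s).first = (s : V)) ∧ (∀ s, (P s).last = b) ∧
    ∀ s t, s ≠ t → Disjoint (P s).edgeSet (P t).edgeSet

/-- The set of `D`-crossing edges: edges with tail in `D` and head outside `D`. -/
def Cross {V : Type*} (Adj : V → V → Prop) (D : Set V) : Set (V × V) :=
  {e | Adj e.1 e.2 ∧ e.1 ∈ D ∧ e.2 ∉ D}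

/-- `D` is exact (for `I` and `b`): `b ∉ D` and the number of `D`-crossing
edges is finite and equals `|D ∩ I|`. -/
def Exact {V : Type*} (Adj : V → V → Prop) (b : V) (I D : Set V) : Prop :=
  b ∉ D ∧ (Cross Adj D).Finite ∧ (D ∩ I).Finite ∧
    (Cross Adj D).ncard = (D ∩ I).ncard

/-- The hull of `D`: the set of vertices `v` such that every directed `v`–`b`
path contains a `D`-crossing edge. -/
def hull {V : Type*} (Adj : V → V → Prop) (b : V) (D : Set V) : Set V :=
  {v | ∀ P : DiPath Adj, P.first = v → P.last = b → ∃ e ∈ P.edges, e ∈ Cross Adj D}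


private lemma natIVT (p : ℕ → Prop) :
    ∀ j i, i < j → p i → ¬ p j → ∃ t, i ≤ t ∧ t < j ∧ p t ∧ ¬ p (t + 1) := by
  intro j
  induction j with
  | zero => omega
  | succ j ih =>
    intro i hij hpi hpj
    by_cases h : p j
    · exact ⟨j, by omega, by omega, h, hpj⟩
    · rcases Nat.lt_or_ge i j with h' | h'
      · obtain ⟨t, h1, h2, h3, h4⟩ := ih i h' hpi h
        exact ⟨t, h1, by omega, h3, h4⟩
      · have hij' : i = j := by omega
        exact absurd (hij' ▸ hpi) h

private lemma path_cross {V : Type*} {Adj : V → V → Prop} {b : V} {D : Set V}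
    (P : DiPath Adj) (h1 : P.first ∈ D) (h2 : P.last = b) (hbD : b ∉ D) :
    ∃ e ∈ P.edges, e ∈ Cross Adj D := by
  classical
  have hne : P.verts ≠ [] := P.ne
  have hlen : 0 < P.verts.length := List.length_pos_iff.mpr hne
  have hfirst : P.verts[0]'hlen ∈ D := by
    rw [List.getElem_zero hlen]; exact h1
  have hlast : P.verts[P.verts.length - 1]'(by omega) ∉ D := by
    rw [← List.getLast_eq_getElem hne]
    show P.last ∉ D
    rw [h2]; exact hbD
  have hlen2 : 1 < P.verts.length := by
    by_contra hcon
    have h01 : P.verts.length - 1 = 0 := by omega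
    simp only [h01] at hlast
    exact hlast hfirst
  have hp0 : P.verts.getD 0 b ∈ D := by
    simpa only [List.getD_eq_getElem P.verts b hlen] using hfirst
  have hpl : ¬ P.verts.getD (P.verts.length - 1) b ∈ D := by
    simpa only [List.getD_eq_getElem P.verts b (show P.verts.length - 1 < P.verts.length by omega)]
      using hlast
  obtain ⟨t, ht0, htl, hpt, hpt1⟩ :=
    natIVT (fun t => P.verts.getD t b ∈ D) (P.verts.length - 1) 0 (by omega) hp0 hpl
  have ht1 : t < P.verts.length := by omega
  have ht2 : t + 1 < P.verts.length := by omega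
  have hmem : P.verts[t]'ht1 ∈ D := by
    have hpt' : P.verts.getD t b ∈ D := hpt
    rwa [List.getD_eq_getElem P.verts b ht1] at hpt'
  have hmem1 : P.verts[t+1]'ht2 ∉ D := by
    have hpt1' : ¬ P.verts.getD (t + 1) b ∈ D := hpt1
    rwa [List.getD_eq_getElem P.verts b ht2] at hpt1' 
  have hadj : Adj (P.verts[t]'ht1) (P.verts[t+1]'ht2) := by
    have := List.isChain_iff_getElem.mp P.chain t (by omega)
    simpa using this
  refine ⟨(P.verts[t]'ht1, P.verts[t+1]'ht2), ?_, hadj, hmem, hmem1⟩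
  show _ ∈ P.verts.zip P.verts.tail
  have htz : t < (P.verts.zip P.verts.tail).length := by
    rw [List.length_zip, List.length_tail]; omega
  have : (P.verts.zip P.verts.tail)[t]'htz = (P.verts[t]'ht1, P.verts[t+1]'ht2) := by
    rw [List.getElem_zip]
    congr 1
    exact List.getElem_tail _
  rw [← this]
  exact List.getElem_mem _

theorem stmt7 {V : Type*} (Adj : V → V → Prop) (b : V) (I : Set V) (hb : b ∉ I)
    (hlink : ∀ S : Finset V, ↑S ⊆ I → FinLinked Adj b S) :
    ¬ ∃ D : ℕ → Set V,
      (∀ n, Exact Adj b I (D n)) ∧ (∀ n, hull Adj b (D n) = D n) ∧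
      (∀ n, D n ⊂ D (n + 1)) ∧ ∃ k : ℕ, ∀ n, (Cross Adj (D n)).ncard ≤ k := by
  classical
  rintro ⟨D, hex, hhull, hssub, k, hk⟩
  have hmono : StrictMono D := strictMono_nat_of_lt_succ hssub
  have hIfin : ∀ n, (D n ∩ I).Finite := fun n => (hex n).2.2.1
  have hcard : ∀ n, (D n ∩ I).ncard ≤ k := by
    intro n; rw [← (hex n).2.2.2]; exact hk n
  set f : ℕ → ℕ := fun n => (D n ∩ I).ncard with hf
  have hbdd : BddAbove (Set.range f) := ⟨k, by rintro x ⟨n, rfl⟩; exact hcard n⟩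
  obtain ⟨N, hN⟩ : ∃ N, f N = sSup (Set.range f) := by
    obtain ⟨N, hN⟩ := Nat.sSup_mem (Set.range_nonempty f) hbdd
    exact ⟨N, hN⟩
  have hstab : ∀ n, N ≤ n → D n ∩ I = D N ∩ I := by
    intro n hn
    refine (Set.eq_of_subset_of_ncard_le ?_ ?_ (hIfin n)).symm
    · exact Set.inter_subset_inter_left I (hmono.monotone hn)
    · calc (D n ∩ I).ncard ≤ sSup (Set.range f) := le_csSup hbdd ⟨n, rfl⟩
        _ = (D N ∩ I).ncard := hN.symm
  set T : Finset V := (hIfin N).toFinset with hT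
  have hTsub : ↑T ⊆ I := by
    intro x hx
    have hx' : x ∈ (hIfin N).toFinset := hx
    exact ((Set.Finite.mem_toFinset (hIfin N)).mp hx').2
  obtain ⟨P, hPfirst, hPlast, hPdis⟩ := hlink T hTsub
  have hcrossP : ∀ n, N ≤ n → ∀ s : ↥T, ∃ e ∈ (P s).edges, e ∈ Cross Adj (D n) := by
    intro n hn s
    apply path_cross (P s) _ (hPlast s) (hex n).1
    rw [hPfirst s]
    have hsmem : (s : V) ∈ D N ∩ I := by
      have hs2 : (s : V) ∈ (hIfin N).toFinset := s.2
      exact (Set.Finite.mem_toFinset (hIfin N)).mp hs2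
    have : (s : V) ∈ D n ∩ I := by rw [hstab n hn]; exact hsmem
    exact this.1
  set E0 : Set (V × V) := ⋃ s : ↥T, (P s).edgeSet with hE0
  have hE0fin : E0.Finite := Set.finite_iUnion (fun s => (P s).edges.finite_toSet)
  have hCsub : ∀ n, N ≤ n → Cross Adj (D n) ⊆ E0 := by
    intro n hn
    choose c hc1 hc2 using hcrossP n hn
    have hcinj : Function.Injective c := by
      intro s t hst
      by_contra hne
      exact (Set.disjoint_left.mp (hPdis s t hne) (hc1 s)) (hst ▸ hc1 t)
    have himg : (↑(Finset.image c T.attach) : Set (V × V)) = Cross Adj (D n) := by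
      apply Set.eq_of_subset_of_ncard_le
      · rintro e he
        simp only [Finset.coe_image, Set.mem_image, Finset.mem_coe, Finset.mem_attach] at he
        obtain ⟨s, _, rfl⟩ := he
        exact hc2 s
      · have h1 : (Cross Adj (D n)).ncard = T.card := by
          rw [(hex n).2.2.2, hstab n hn, hT]
          exact Set.ncard_eq_toFinset_card _ (hIfin N)
        rw [h1, Set.ncard_coe_finset, Finset.card_image_of_injective _ hcinj,
          Finset.card_attach]
      · exact (hex n).2.1
    intro e he
    rw [← himg] at he
    simp only [Finset.coe_image, Set.mem_image, Finset.mem_coe, Finset.mem_attach] at he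
    obtain ⟨s, _, rfl⟩ := he
    exact Set.mem_iUnion.mpr ⟨s, hc1 s⟩
  have : Finite ↥{A : Set (V × V) | A ⊆ E0} := (hE0fin.finite_subsets).to_subtype
  obtain ⟨m, n, hmn, heq⟩ := Finite.exists_ne_map_eq_of_infinite
    (fun i : ℕ => (⟨Cross Adj (D (N + i)), hCsub (N + i) (Nat.le_add_right N i)⟩ :
      {A : Set (V × V) | A ⊆ E0}))
  have hCeq : Cross Adj (D (N + m)) = Cross Adj (D (N + n)) := congrArg Subtype.val heq
  have hDeq : D (N + m) = D (N + n) := by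
    rw [← hhull (N + m), ← hhull (N + n)]
    unfold hull
    rw [hCeq]
  rcases hmn.lt_or_gt with h | h
  · exact absurd hDeq (hmono (by omega : N + m < N + n)).ne
  · exact absurd hDeq.symm (hmono (by omega : N + n < N + m)).ne
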